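/- Let 0 < p < 1 and τ ∈ ℕ with τ ≥ 1. For the τ-dimensional shift realization of the delay, with F_τ = (I − √p·A_τ)^{-1}(A_τ − √p·I), G_τ = (1−p)·(I − √p·A_τ)^{-1}B_τ, and H_τ = C_τ·(I − √p·A_τ)^{-1}, it holds for every j ≥ 1 that (1−p)·L^{(τ)}_j(√p) = H_τ·F_τ^{j−1}·G_τ. -/

import Mathlib

open PowerSeries Finset

open PowerSeries Finset

lemma conv_sum (φ ψ : PowerSeries ℝ) (τ i j : ℕ) (hji : j ≤ i) (hi : i < τ) :
    ∑ m ∈ range τ, (if m ≤ i then coeff (i - m) φ else 0) * (if j ≤ m then coeff (m - j) ψ else 0)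
      = coeff (i - j) (φ * ψ) := by
  rw [coeff_mul, Finset.Nat.sum_antidiagonal_eq_sum_range_succ_mk]
  have hsub : Finset.Icc j i ⊆ range τ := fun m hm =>
    Finset.mem_range.mpr (lt_of_le_of_lt (Finset.mem_Icc.mp hm).2 hi)
  rw [← Finset.sum_subset hsub ?_]
  · refine Finset.sum_nbij' (fun m => i - m) (fun k => i - k) ?_ ?_ ?_ ?_ ?_
    · intro m hm; rw [Finset.mem_Icc] at hm; rw [Finset.mem_range]; omega
    · intro k hk; rw [Finset.mem_range] at hk; rw [Finset.mem_Icc]; omega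
    · intro m hm; rw [Finset.mem_Icc] at hm; omega
    · intro k hk; rw [Finset.mem_range] at hk; omega
    · intro m hm
      rw [Finset.mem_Icc] at hm
      dsimp only
      rw [if_pos hm.2, if_pos hm.1]
      have e : i - j - (i - m) = m - j := by omega
      rw [e]
  · intro m _ hnot
    rw [Finset.mem_Icc, not_and_or, not_le, not_le] at hnot
    rcases hnot with h | h
    · rw [if_neg (show ¬ j ≤ m by omega), mul_zero]
    · rw [if_neg (show ¬ m ≤ i by omega), zero_mul]

section Toeplitz

variable (τ : ℕ)

/-- Lower-triangular Toeplitz matrix from a power series. -/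
noncomputable def Tm (φ : PowerSeries ℝ) : Matrix (Fin τ) (Fin τ) ℝ :=
  Matrix.of fun i j => if (j : ℕ) ≤ (i : ℕ) then coeff ((i : ℕ) - j) φ else 0

variable {τ}

lemma Tm_mul (φ ψ : PowerSeries ℝ) : Tm τ φ * Tm τ ψ = Tm τ (φ * ψ) := by
  ext i j
  simp only [Matrix.mul_apply, Tm, Matrix.of_apply]
  by_cases hji : (j : ℕ) ≤ (i : ℕ)
  · rw [if_pos hji]
    rw [Fin.sum_univ_eq_sum_range
      (fun m => (if m ≤ (i:ℕ) then coeff ((i:ℕ) - m) φ else 0) *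
        (if (j:ℕ) ≤ m then coeff (m - (j:ℕ)) ψ else 0))]
    exact conv_sum φ ψ τ i j hji i.isLt
  · rw [if_neg hji]
    refine Finset.sum_eq_zero fun l _ => ?_
    by_cases h1 : (l : ℕ) ≤ (i : ℕ)
    · rw [if_neg (show ¬ ((j:ℕ) ≤ (l:ℕ)) by omega), mul_zero]
    · rw [if_neg h1, zero_mul]

lemma Tm_one : Tm τ 1 = 1 := by
  ext i j
  simp only [Tm, Matrix.of_apply, coeff_one, Matrix.one_apply]
  by_cases h : i = j
  · subst h; simp
  · have : ¬ ((i:ℕ) = (j:ℕ)) := fun hc => h (Fin.ext hc)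
    by_cases h2 : (j:ℕ) ≤ (i:ℕ)
    · rw [if_pos h2, if_neg (by omega), if_neg h]
    · rw [if_neg h2, if_neg h]

lemma Tm_pow (φ : PowerSeries ℝ) (n : ℕ) : (Tm τ φ) ^ n = Tm τ (φ ^ n) := by
  induction n with
  | zero => simp [Tm_one]
  | succ n ih => rw [pow_succ, pow_succ, ih, Tm_mul]

lemma Tm_smul (c : ℝ) (φ : PowerSeries ℝ) : Tm τ (C c * φ) = c • Tm τ φ := by
  ext i j
  simp only [Tm, Matrix.of_apply, Matrix.smul_apply, coeff_C_mul, smul_eq_mul]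
  split <;> simp

lemma Tm_sub (φ ψ : PowerSeries ℝ) : Tm τ (φ - ψ) = Tm τ φ - Tm τ ψ := by
  ext i j
  simp only [Tm, Matrix.of_apply, Matrix.sub_apply, map_sub]
  split <;> simp

end Toeplitz

/-- The geometric series. -/
noncomputable def geomQ (s : ℝ) : PowerSeries ℝ := PowerSeries.mk fun k => s ^ k

lemma geomQ_inv (s : ℝ) : (1 - PowerSeries.C s * PowerSeries.X) * geomQ s = 1 := by
  ext n
  rw [sub_mul, one_mul, mul_assoc, map_sub, coeff_C_mul]
  cases n with
  | zero => simp [geomQ]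
  | succ n => simp [geomQ, coeff_succ_X_mul, coeff_mk, pow_succ, coeff_one, mul_comm]

lemma hockey (m : ℕ) : ∀ k : ℕ, ∑ a ∈ range (k + 1), (m + a).choose a = (m + k + 1).choose k := by
  intro k
  induction k with
  | zero => simp
  | succ k ih =>
    rw [Finset.sum_range_succ, ih]
    have e1 : m + (k + 1) = m + k + 1 := by ring
    rw [e1, Nat.choose_succ_succ (m + k + 1) k]

lemma coeff_geomQ_pow (s : ℝ) (m : ℕ) : ∀ k : ℕ,
    PowerSeries.coeff k ((geomQ s) ^ (m + 1)) = ((m + k).choose k : ℝ) * s ^ k := by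
  induction m with
  | zero => intro k; simp [geomQ, coeff_mk]
  | succ m ih =>
    intro k
    rw [pow_succ, coeff_mul, Finset.Nat.sum_antidiagonal_eq_sum_range_succ_mk]
    have hterm : ∀ a ∈ range (k+1), PowerSeries.coeff ((a, k-a).1) ((geomQ s)^(m+1)) *
        PowerSeries.coeff ((a, k-a).2) (geomQ s)
        = ((m + a).choose a : ℝ) * s ^ k := by
      intro a ha
      rw [Finset.mem_range] at ha
      dsimp only
      rw [ih a]
      simp only [geomQ, coeff_mk]
      rw [mul_assoc, ← pow_add]
      congr 2
      omega
    rw [Finset.sum_congr rfl hterm, ← Finset.sum_mul, ← Nat.cast_sum, hockey]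
    have : m + 1 + k = m + k + 1 := by omega
    rw [this]

lemma coeff_XsubC_pow (s : ℝ) (r : ℕ) (k : ℕ) :
    PowerSeries.coeff k ((PowerSeries.X - PowerSeries.C s) ^ r) =
      if k ≤ r then (r.choose k : ℝ) * (-s) ^ (r - k) else 0 := by
  have h0 : (PowerSeries.X - PowerSeries.C s) = PowerSeries.X + PowerSeries.C (-s) := by
    rw [map_neg]; ring
  rw [h0, add_pow, map_sum]
  have hterm : ∀ i ∈ range (r+1),
      PowerSeries.coeff k (PowerSeries.X ^ i * PowerSeries.C (-s) ^ (r - i) * (r.choose i : PowerSeries ℝ))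
      = if i = k then (r.choose k : ℝ) * (-s) ^ (r - k) else 0 := by
    intro i hi
    rw [← map_natCast (PowerSeries.C (R := ℝ)) (r.choose i), ← map_pow, mul_assoc, ← map_mul,
      PowerSeries.coeff_mul_C, PowerSeries.coeff_X_pow]
    by_cases h : k = i
    · subst h; simp [mul_comm]
    · rw [if_neg h, if_neg (fun hc => h hc.symm), zero_mul]
  rw [Finset.sum_congr rfl hterm, Finset.sum_ite_eq' (range (r+1)) k]
  simp [Nat.lt_succ_iff]

lemma TmCB {τ : ℕ} (Cm : Matrix (Fin 1) (Fin τ) ℝ) (Bm : Matrix (Fin τ) (Fin 1) ℝ)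
    (φ ψ χ : PowerSeries ℝ) :
    Cm * Tm τ φ * Tm τ ψ * (Tm τ χ * Bm) = Cm * Tm τ (φ * ψ * χ) * Bm := by
  rw [Matrix.mul_assoc Cm (Tm τ φ) (Tm τ ψ), Tm_mul,
    ← Matrix.mul_assoc (Cm * Tm τ (φ * ψ)) (Tm τ χ) Bm,
    Matrix.mul_assoc Cm (Tm τ (φ * ψ)) (Tm τ χ), Tm_mul]

/-- The polynomial factor `L_m^{(τ)}(√p)` in the Laguerre-domain delay description. -/
noncomputable def delayLaguerrePoly (p : ℝ) (τ m : ℕ) : ℝ :=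
  (-Real.sqrt p) ^ ((m : ℤ) - (τ : ℤ)) *
    ∑ n ∈ Finset.range τ,
      ((m + n).choose n : ℝ) * ((m - 1).choose (τ - n - 1) : ℝ) * (-p) ^ n

/-- The Markov parameters of the Laguerre-domain realization of the `τ`-step delay
are `(1−p)·L_j^{(τ)}(√p) = H_τ F_τ^{j−1} G_τ` for `j ≥ 1`. -/
theorem delay_markov_parameters (p : ℝ) (hp0 : 0 < p) (hp1 : p < 1) (τ : ℕ) (hτ : 1 ≤ τ)
    (A : Matrix (Fin τ) (Fin τ) ℝ) (B : Matrix (Fin τ) (Fin 1) ℝ)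
    (C : Matrix (Fin 1) (Fin τ) ℝ)
    (hA : ∀ i j : Fin τ, A i j = if (i : ℕ) = (j : ℕ) + 1 then 1 else 0)
    (hB : ∀ i : Fin τ, B i 0 = if (i : ℕ) = 0 then 1 else 0)
    (hC : ∀ j : Fin τ, C 0 j = if (j : ℕ) = τ - 1 then 1 else 0)
    (F : Matrix (Fin τ) (Fin τ) ℝ) (G : Matrix (Fin τ) (Fin 1) ℝ)
    (H : Matrix (Fin 1) (Fin τ) ℝ)
    (hF : F = (1 - Real.sqrt p • A)⁻¹ * (A - Real.sqrt p • 1))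
    (hG : G = (1 - p) • ((1 - Real.sqrt p • A)⁻¹ * B))
    (hH : H = C * (1 - Real.sqrt p • A)⁻¹) :
    ∀ j : ℕ, 1 ≤ j →
      (1 - p) * delayLaguerrePoly p τ j = (H * F ^ (j - 1) * G) 0 0 := by
  set s : ℝ := Real.sqrt p with hs_def
  have hs : 0 < s := Real.sqrt_pos.mpr hp0
  have hsne : (-s) ≠ 0 := neg_ne_zero.mpr (ne_of_gt hs)
  have hps : p = s * s := (Real.mul_self_sqrt hp0.le).symm
  -- A is the Toeplitz matrix of X
  have hAT : Tm τ (X : PowerSeries ℝ) = A := by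
    ext i j
    rw [hA i j]
    simp only [Tm, Matrix.of_apply]
    rw [← pow_one (X : PowerSeries ℝ), coeff_X_pow]
    have hi := i.isLt
    have hj := j.isLt
    split_ifs <;> first | rfl | omega
  -- 1 - s•A
  have hsone : Tm τ (PowerSeries.C s) = s • (1 : Matrix (Fin τ) (Fin τ) ℝ) := by
    have h1 := Tm_smul (τ := τ) s 1
    rw [mul_one] at h1
    rw [h1, Tm_one]
  have hMT : Tm τ (1 - PowerSeries.C s * X) = 1 - s • A := by
    rw [Tm_sub, Tm_one, Tm_smul, hAT]
  have hMinv : (1 - s • A)⁻¹ = Tm τ (geomQ s) := by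
    apply Matrix.inv_eq_right_inv
    rw [← hMT, Tm_mul, geomQ_inv, Tm_one]
  have hAs : A - s • 1 = Tm τ (X - PowerSeries.C s) := by
    rw [Tm_sub, hAT, hsone]
  have hFT : F = Tm τ (geomQ s * (X - PowerSeries.C s)) := by
    rw [hF, hMinv, hAs, Tm_mul]
  -- entry extraction lemma
  have hentry : ∀ φ : PowerSeries ℝ, (C * Tm τ φ * B) 0 0 = coeff (τ - 1) φ := by
    intro φ
    rw [Matrix.mul_apply]
    rw [Finset.sum_eq_single_of_mem (⟨0, hτ⟩ : Fin τ) (Finset.mem_univ _) ?_]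
    · rw [hB, if_pos rfl, mul_one, Matrix.mul_apply]
      rw [Finset.sum_eq_single_of_mem (⟨τ - 1, by omega⟩ : Fin τ) (Finset.mem_univ _) ?_]
      · rw [hC, if_pos rfl, one_mul]
        simp only [Tm, Matrix.of_apply]
        rw [if_pos (Nat.zero_le _)]
        simp
      · intro b _ hb
        rw [hC, if_neg, zero_mul]
        intro hc
        exact hb (Fin.ext (by simpa using hc))
    · intro b _ hb
      rw [hB, if_neg, mul_zero]
      intro hc
      exact hb (Fin.ext (by simpa using hc))
  intro j hj
  obtain ⟨r, rfl⟩ : ∃ r, j = r + 1 := ⟨j - 1, (Nat.succ_pred_eq_of_pos hj).symm⟩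
  rw [Nat.add_sub_cancel]
  have hW : F ^ r = Tm τ ((geomQ s * (X - PowerSeries.C s)) ^ r) := by
    rw [hFT, Tm_pow]
  have hprod : H * F ^ r * G = (1 - p) •
      (C * Tm τ (geomQ s * (geomQ s * (X - PowerSeries.C s)) ^ r * geomQ s) * B) := by
    rw [hH, hG, hMinv, hW, Matrix.mul_smul]
    congr 1
    exact TmCB C B _ _ _
  rw [hprod, Matrix.smul_apply, smul_eq_mul, hentry]
  congr 1
  -- the coefficient identity
  have hring : geomQ s * (geomQ s * (X - PowerSeries.C s)) ^ r * geomQ s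
      = (geomQ s) ^ (r + 1 + 1) * (X - PowerSeries.C s) ^ r := by
    rw [mul_pow]; ring
  rw [hring, coeff_mul, Finset.Nat.sum_antidiagonal_eq_sum_range_succ_mk]
  have hτ1 : (τ - 1).succ = τ := by omega
  rw [hτ1]
  unfold delayLaguerrePoly
  rw [Finset.mul_sum]
  refine Finset.sum_congr rfl ?_
  intro n hn
  rw [Finset.mem_range] at hn
  dsimp only
  rw [coeff_geomQ_pow, coeff_XsubC_pow]
  have hch : (r + 1 + n) = (r + 1 + n) := rfl
  by_cases hcase : τ - 1 - n ≤ r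
  · rw [if_pos hcase]
    have he : ((r - (τ - 1 - n) : ℕ) : ℤ) = ((r + 1 : ℕ) : ℤ) - τ + n := by
      push_cast
      omega
    have hz : (-s) ^ (r - (τ - 1 - n)) = (-s) ^ (((r + 1 : ℕ) : ℤ) - (τ : ℤ)) * (-s) ^ n := by
      rw [← zpow_natCast (-s) (r - (τ - 1 - n)), he, zpow_add₀ hsne, zpow_natCast]
    have hpn : (-p) ^ n = (-s) ^ n * s ^ n := by
      rw [hps, ← neg_mul, mul_pow]
    have hmm : (r + 1 - 1) = r := by omega
    have htn : τ - n - 1 = τ - 1 - n := by omega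
    rw [hmm, htn, hpn, hz]
    ring
  · rw [if_neg hcase]
    have hz : ((r + 1 - 1).choose (τ - n - 1) : ℝ) = 0 := by
      rw [Nat.choose_eq_zero_of_lt (by omega)]
      norm_num
    rw [hz]
    ring
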